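/- Let H₁ : Matrix n_p n_s ℝ, H₂ : Matrix n_p n_a ℝ, H₃ : Matrix n_q n_s ℝ, H₄ : Matrix n_r n_s ℝ, H₅ : Matrix n_b n_a ℝ, and let E₁ : Matrix n_b n_b ℝ and E₂ : Matrix n_r n_r ℝ be invertible with H₅ᵀE₁⁻¹H₅ (of size n_a × n_a) and H₄ᵀE₂⁻¹H₄ (of size n_s × n_s) invertible. Suppose vectors Δp, Δq, Δr, Δs, Δβ, Δα and residuals R_u, R_θ satisfy: H₁Δs + H₂Δα = R_u; H₃Δs = R_θ; E₂Δr − H₄Δs = 0; H₁ᵀΔp + H₃ᵀΔq − H₄ᵀΔr = 0; E₁Δβ − H₅Δα = 0; H₂ᵀΔp − H₅ᵀΔβ = 0. Then (H₂(H₅ᵀE₁⁻¹H₅)⁻¹H₂ᵀ + H₁(H₄ᵀE₂⁻¹H₄)⁻¹H₁ᵀ)Δp + H₁(H₄ᵀE₂⁻¹H₄)⁻¹H₃ᵀΔq = R_u and H₃(H₄ᵀE₂⁻¹H₄)⁻¹H₁ᵀΔp + H₃(H₄ᵀE₂⁻¹H₄)⁻¹H₃ᵀΔq = R_θ. -/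
import Mathlib


open Matrix

/-- 'Option one' static condensation of the six-field block system: assuming `E₁`,
`E₂` and the Schur-type products `H₅ᵀE₁⁻¹H₅` and `H₄ᵀE₂⁻¹H₄` are invertible, any
solution of the full block system satisfies the condensed system. -/
theorem option_one_static_condensation {np nq nr ns nb na : ℕ}
    (H₁ : Matrix (Fin np) (Fin ns) ℝ) (H₂ : Matrix (Fin np) (Fin na) ℝ)
    (H₃ : Matrix (Fin nq) (Fin ns) ℝ) (H₄ : Matrix (Fin nr) (Fin ns) ℝ)
    (H₅ : Matrix (Fin nb) (Fin na) ℝ)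
    (E₁ : Matrix (Fin nb) (Fin nb) ℝ) (E₂ : Matrix (Fin nr) (Fin nr) ℝ)
    (hE₁ : IsUnit E₁) (hE₂ : IsUnit E₂)
    (hS₁ : IsUnit (H₅ᵀ * E₁⁻¹ * H₅)) (hS₂ : IsUnit (H₄ᵀ * E₂⁻¹ * H₄))
    (Δp Ru : Fin np → ℝ) (Δq Rθ : Fin nq → ℝ) (Δr : Fin nr → ℝ) (Δs : Fin ns → ℝ)
    (Δβ : Fin nb → ℝ) (Δα : Fin na → ℝ)
    (h1 : H₁ *ᵥ Δs + H₂ *ᵥ Δα = Ru)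
    (h2 : H₃ *ᵥ Δs = Rθ)
    (h3 : E₂ *ᵥ Δr - H₄ *ᵥ Δs = 0)
    (h4 : H₁ᵀ *ᵥ Δp + H₃ᵀ *ᵥ Δq - H₄ᵀ *ᵥ Δr = 0)
    (h5 : E₁ *ᵥ Δβ - H₅ *ᵥ Δα = 0)
    (h6 : H₂ᵀ *ᵥ Δp - H₅ᵀ *ᵥ Δβ = 0) :
    (H₂ * (H₅ᵀ * E₁⁻¹ * H₅)⁻¹ * H₂ᵀ + H₁ * (H₄ᵀ * E₂⁻¹ * H₄)⁻¹ * H₁ᵀ) *ᵥ Δp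
        + (H₁ * (H₄ᵀ * E₂⁻¹ * H₄)⁻¹ * H₃ᵀ) *ᵥ Δq = Ru ∧
      (H₃ * (H₄ᵀ * E₂⁻¹ * H₄)⁻¹ * H₁ᵀ) *ᵥ Δp
        + (H₃ * (H₄ᵀ * E₂⁻¹ * H₄)⁻¹ * H₃ᵀ) *ᵥ Δq = Rθ := by

  have dE₁ := E₁.isUnit_iff_isUnit_det.mp hE₁
  have dE₂ := E₂.isUnit_iff_isUnit_det.mp hE₂
  have dS₁ := (H₅ᵀ * E₁⁻¹ * H₅).isUnit_iff_isUnit_det.mp hS₁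
  have dS₂ := (H₄ᵀ * E₂⁻¹ * H₄).isUnit_iff_isUnit_det.mp hS₂
  -- Δr = E₂⁻¹ H₄ Δs
  have hr : Δr = (E₂⁻¹ * H₄) *ᵥ Δs := by
    have h3' : E₂ *ᵥ Δr = H₄ *ᵥ Δs := sub_eq_zero.mp h3
    calc Δr = (E₂⁻¹ * E₂) *ᵥ Δr := by rw [E₂.nonsing_inv_mul dE₂, one_mulVec]
    _ = E₂⁻¹ *ᵥ (E₂ *ᵥ Δr) := by rw [mulVec_mulVec]
    _ = (E₂⁻¹ * H₄) *ᵥ Δs := by rw [h3', mulVec_mulVec]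
  -- Δβ = E₁⁻¹ H₅ Δα
  have hb : Δβ = (E₁⁻¹ * H₅) *ᵥ Δα := by
    have h5' : E₁ *ᵥ Δβ = H₅ *ᵥ Δα := sub_eq_zero.mp h5
    calc Δβ = (E₁⁻¹ * E₁) *ᵥ Δβ := by rw [E₁.nonsing_inv_mul dE₁, one_mulVec]
    _ = E₁⁻¹ *ᵥ (E₁ *ᵥ Δβ) := by rw [mulVec_mulVec]
    _ = (E₁⁻¹ * H₅) *ᵥ Δα := by rw [h5', mulVec_mulVec]
  -- Δα = S₁⁻¹ H₂ᵀ Δp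
  have ha : Δα = (H₅ᵀ * E₁⁻¹ * H₅)⁻¹ *ᵥ (H₂ᵀ *ᵥ Δp) := by
    have h6' : H₂ᵀ *ᵥ Δp = (H₅ᵀ * E₁⁻¹ * H₅) *ᵥ Δα := by
      have := sub_eq_zero.mp h6
      rw [this, hb, mulVec_mulVec, ← Matrix.mul_assoc]
    rw [h6', mulVec_mulVec, (H₅ᵀ * E₁⁻¹ * H₅).nonsing_inv_mul dS₁, one_mulVec]
  -- Δs = S₂⁻¹ (H₁ᵀ Δp + H₃ᵀ Δq)
  have hs : Δs = (H₄ᵀ * E₂⁻¹ * H₄)⁻¹ *ᵥ (H₁ᵀ *ᵥ Δp + H₃ᵀ *ᵥ Δq) := by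
    have h4' : H₁ᵀ *ᵥ Δp + H₃ᵀ *ᵥ Δq = (H₄ᵀ * E₂⁻¹ * H₄) *ᵥ Δs := by
      have := sub_eq_zero.mp h4
      rw [this, hr, mulVec_mulVec, ← Matrix.mul_assoc]
    rw [h4', mulVec_mulVec, (H₄ᵀ * E₂⁻¹ * H₄).nonsing_inv_mul dS₂, one_mulVec]
  constructor
  · rw [← h1, hs, ha]
    simp only [add_mulVec, mulVec_mulVec, mulVec_add, Matrix.mul_assoc]
    abel
  · rw [← h2, hs]
    simp only [add_mulVec, mulVec_mulVec, mulVec_add, Matrix.mul_assoc]
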